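/- Let g : (0,∞) → ℝ be continuous. Assume: (a) there exists t₁ > 0 such that g(t) > 0 for all t ∈ (0,t₁); (b) there exists T > 0 such that g(t) < 0 for all t ≥ T; (c) g is differentiable at every zero point and g'(t) < 0 whenever g(t) = 0. Then g has exactly one zero t* in (0,∞); moreover g(t) > 0 for all t ∈ (0,t*) and g(t) < 0 for all t ∈ (t*,∞). -/

import Mathlib

open Set

open Filter Topology in
/-- Near a zero with negative derivative, `g` is positive just to the left. -/
lemma fib_aux_left {g : ℝ → ℝ} {t : ℝ} (h : HasDerivAt g (deriv g t) t)
    (h0 : g t = 0) (hd : deriv g t < 0) :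
    ∃ l < t, ∀ s, l < s → s < t → 0 < g s := by
  have hs := hasDerivAt_iff_tendsto_slope.1 h
  have hev : ∀ᶠ s in 𝓝[≠] t, slope g t s < 0 := hs.eventually_lt_const hd
  have hle : 𝓝[Iio t] t ≤ 𝓝[≠] t := nhdsWithin_mono t (fun x hx => ne_of_lt hx)
  have hev2 : ∀ᶠ s in 𝓝[<] t, slope g t s < 0 := hle hev
  rw [eventually_iff, mem_nhdsLT_iff_exists_Ioo_subset] at hev2
  obtain ⟨l, hl, hsub⟩ := hev2
  refine ⟨l, hl, fun s hs1 hs2 => ?_⟩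
  have hslope := hsub ⟨hs1, hs2⟩
  simp only [mem_setOf_eq, slope_def_field, h0, sub_zero] at hslope
  rcases div_neg_iff.1 hslope with ⟨hg, _⟩ | ⟨_, hst⟩
  · exact hg
  · linarith

open Filter Topology in
/-- Near a zero with negative derivative, `g` is negative just to the right. -/
lemma fib_aux_right {g : ℝ → ℝ} {t : ℝ} (h : HasDerivAt g (deriv g t) t)
    (h0 : g t = 0) (hd : deriv g t < 0) :
    ∃ u > t, ∀ s, t < s → s < u → g s < 0 := by
  have hs := hasDerivAt_iff_tendsto_slope.1 h
  have hev : ∀ᶠ s in 𝓝[≠] t, slope g t s < 0 := hs.eventually_lt_const hd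
  have hle : 𝓝[Ioi t] t ≤ 𝓝[≠] t := nhdsWithin_mono t (fun x hx => ne_of_gt hx)
  have hev2 : ∀ᶠ s in 𝓝[>] t, slope g t s < 0 := hle hev
  rw [eventually_iff, mem_nhdsGT_iff_exists_Ioo_subset] at hev2
  obtain ⟨u, hu, hsub⟩ := hev2
  refine ⟨u, hu, fun s hs1 hs2 => ?_⟩
  have hslope := hsub ⟨hs1, hs2⟩
  simp only [mem_setOf_eq, slope_def_field, h0, sub_zero] at hslope
  rcases div_neg_iff.1 hslope with ⟨_, hst⟩ | ⟨hg, _⟩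
  · linarith
  · exact hg

/-- Fibering-map lemma: a continuous function on `(0,∞)`, positive near `0`,
eventually negative, and with strictly negative derivative at each of its zeros,
has exactly one zero `t*`; it is positive on `(0,t*)` and negative on `(t*,∞)`. -/
theorem fibering_map_unique_zero
    (g : ℝ → ℝ) (hg : ContinuousOn g (Ioi 0))
    (hpos : ∃ t₁ > (0 : ℝ), ∀ t, 0 < t → t < t₁ → 0 < g t)
    (hneg : ∃ T > (0 : ℝ), ∀ t ≥ T, g t < 0)
    (hdiff : ∀ t > (0 : ℝ), g t = 0 → DifferentiableAt ℝ g t)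
    (hderiv : ∀ t > (0 : ℝ), g t = 0 → deriv g t < 0) :
    ∃ tstar > (0 : ℝ), g tstar = 0 ∧
      (∀ t, 0 < t → t < tstar → 0 < g t) ∧
      (∀ t, tstar < t → g t < 0) ∧
      (∀ t > (0 : ℝ), g t = 0 → t = tstar) := by
  obtain ⟨t₁, ht₁, hp⟩ := hpos
  obtain ⟨T, hT, hn⟩ := hneg
  -- a point where g is positive
  set a : ℝ := min t₁ T / 2 with ha_def
  have ha0 : 0 < a := by positivity
  have hat₁ : a < t₁ := by
    have : min t₁ T ≤ t₁ := min_le_left _ _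
    simp only [ha_def]; linarith
  have haT : a < T := by
    have : min t₁ T ≤ T := min_le_right _ _
    simp only [ha_def]; linarith
  have hga : 0 < g a := hp a ha0 hat₁
  have hgT : g T < 0 := hn T le_rfl
  -- continuity at points of Ioi 0
  have hcont : ∀ t : ℝ, 0 < t → ContinuousAt g t := fun t ht =>
    hg.continuousAt (isOpen_Ioi.mem_nhds ht)
  -- zero set
  set Z : Set ℝ := {t | 0 < t ∧ g t = 0} with hZ_def
  -- Z is nonempty by IVT
  have hZne : Z.Nonempty := by
    have hIcc : Icc a T ⊆ Ioi 0 := fun x hx => lt_of_lt_of_le ha0 hx.1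
    have hc : ContinuousOn g (Icc a T) := hg.mono hIcc
    have h0 : (0 : ℝ) ∈ Icc (g T) (g a) := ⟨le_of_lt hgT, le_of_lt hga⟩
    obtain ⟨c, hc1, hc2⟩ := intermediate_value_Icc' (le_of_lt haT) hc h0
    exact ⟨c, lt_of_lt_of_le ha0 hc1.1, hc2⟩
  -- Z is bounded below by t₁
  have hZbd : ∀ z ∈ Z, t₁ ≤ z := by
    intro z hz
    by_contra hlt
    push_neg at hlt
    exact absurd hz.2 (ne_of_gt (hp z hz.1 hlt))
  have hbdd : BddBelow Z := ⟨t₁, hZbd⟩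
  set tstar : ℝ := sInf Z with hts_def
  have hts1 : t₁ ≤ tstar := le_csInf hZne hZbd
  have hts0 : 0 < tstar := lt_of_lt_of_le ht₁ hts1
  -- g tstar = 0
  have hgs : g tstar = 0 := by
    by_contra hne
    have hev : ∀ᶠ y in nhds tstar, g y ≠ 0 := (hcont tstar hts0).eventually_ne hne
    obtain ⟨ε, hε, hball⟩ := Metric.eventually_nhds_iff.1 hev
    have hbound : ∀ z ∈ Z, tstar + ε ≤ z := by
      intro z hz
      by_contra hlt
      push_neg at hlt
      have hz1 : tstar ≤ z := csInf_le hbdd hz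
      have : dist z tstar < ε := by
        rw [Real.dist_eq, abs_of_nonneg (by linarith)]; linarith
      exact hball this hz.2
    have := le_csInf hZne hbound
    linarith
  -- positivity on (0, tstar)
  have hposlt : ∀ t, 0 < t → t < tstar → 0 < g t := by
    intro t ht htlt
    by_contra hle
    push_neg at hle
    rcases lt_or_eq_of_le hle with hlt | heq
    · -- g t < 0: IVT on [a, t] gives a zero below tstar
      have hat : a < t := by
        have : t₁ ≤ t := by
          by_contra h'
          push_neg at h'
          exact absurd (hp t ht h') (not_lt.2 hle)
        linarith
      have hIcc : Icc a t ⊆ Ioi 0 := fun x hx => lt_of_lt_of_le ha0 hx.1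
      have hc : ContinuousOn g (Icc a t) := hg.mono hIcc
      obtain ⟨c, hc1, hc2⟩ := intermediate_value_Icc' (le_of_lt hat) hc
        ⟨le_of_lt hlt, le_of_lt hga⟩
      have hcZ : c ∈ Z := ⟨lt_of_lt_of_le ha0 hc1.1, hc2⟩
      have := csInf_le hbdd hcZ
      have : tstar ≤ t := le_trans this hc1.2
      linarith
    · -- g t = 0 : t ∈ Z with t < tstar, contradiction
      have : tstar ≤ t := csInf_le hbdd ⟨ht, heq⟩
      linarith
  -- negativity on (tstar, ∞)
  have hneglt : ∀ t, tstar < t → g t < 0 := by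
    intro t htlt
    by_contra hge
    push_neg at hge
    -- set of points > tstar where g ≥ 0
    set B : Set ℝ := {s | tstar < s ∧ 0 ≤ g s} with hB_def
    have hBne : B.Nonempty := ⟨t, htlt, hge⟩
    have hBbd : BddBelow B := ⟨tstar, fun s hs => le_of_lt hs.1⟩
    set u : ℝ := sInf B with hu_def
    -- g is negative just right of tstar
    have hder : HasDerivAt g (deriv g tstar) tstar :=
      (hdiff tstar hts0 hgs).hasDerivAt
    obtain ⟨w, hw, hwneg⟩ := fib_aux_right hder hgs (hderiv tstar hts0 hgs)
    -- all elements of B are ≥ min w ... : B ⊆ [min w t, ∞) roughly; get u > tstar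
    have hBlow : ∀ s ∈ B, min w (tstar + 1) ≤ s := by
      intro s hs
      by_contra h'
      push_neg at h'
      have hs2 : s < w := lt_of_lt_of_le h' (min_le_left _ _)
      exact absurd hs.2 (not_le.2 (hwneg s hs.1 hs2))
    have humin : min w (tstar + 1) ≤ u := le_csInf hBne hBlow
    have hu_gt : tstar < u :=
      lt_of_lt_of_le (lt_min hw (by linarith)) humin
    have hu0 : 0 < u := lt_trans hts0 hu_gt
    -- g < 0 on (tstar, u)
    have hng : ∀ s, tstar < s → s < u → g s < 0 := by
      intro s hs1 hs2
      by_contra h'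
      push_neg at h'
      have : u ≤ s := csInf_le hBbd ⟨hs1, h'⟩
      linarith
    -- g u ≥ 0
    have hgu_ge : 0 ≤ g u := by
      by_contra h'
      push_neg at h'
      have hev : ∀ᶠ y in nhds u, g y < 0 :=
        (hcont u hu0).eventually (eventually_lt_nhds h' |>.mono fun y hy => hy)
      obtain ⟨ε, hε, hball⟩ := Metric.eventually_nhds_iff.1 hev
      have hbound : ∀ s ∈ B, u + ε ≤ s := by
        intro s hs
        by_contra hlt
        push_neg at hlt
        have hs1 : u ≤ s := csInf_le hBbd hs
        have : dist s u < ε := by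
          rw [Real.dist_eq, abs_of_nonneg (by linarith)]; linarith
        exact absurd hs.2 (not_le.2 (hball this))
      have := le_csInf hBne hbound
      linarith
    -- g u ≤ 0
    have hgu_le : g u ≤ 0 := by
      by_contra h'
      push_neg at h'
      have hev : ∀ᶠ y in nhds u, 0 < g y :=
        (hcont u hu0).eventually (eventually_gt_nhds h' |>.mono fun y hy => hy)
      obtain ⟨ε, hε, hball⟩ := Metric.eventually_nhds_iff.1 hev
      -- pick s ∈ (max tstar (u - ε), u)
      set s : ℝ := max tstar (u - ε) / 2 + u / 2 with hs_def
      have hmax_lt : max tstar (u - ε) < u := max_lt hu_gt (by linarith)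
      have hs1 : tstar < s := by
        have h1 : tstar ≤ max tstar (u - ε) := le_max_left _ _
        have := hmax_lt
        simp only [hs_def]; linarith
      have hs2 : s < u := by
        simp only [hs_def]; linarith
      have hs3 : u - ε < s := by
        have h1 : u - ε ≤ max tstar (u - ε) := le_max_right _ _
        simp only [hs_def]; linarith
      have hdist : dist s u < ε := by
        rw [Real.dist_eq, abs_of_nonpos (by linarith)]; linarith
      exact absurd (hball hdist) (not_lt.2 (le_of_lt (hng s hs1 hs2)))
    have hgu : g u = 0 := le_antisymm hgu_le hgu_ge
    -- derivative at u negative ⇒ g positive just left of u, contradiction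
    have hderu : HasDerivAt g (deriv g u) u := (hdiff u hu0 hgu).hasDerivAt
    obtain ⟨l, hl, hlpos⟩ := fib_aux_left hderu hgu (hderiv u hu0 hgu)
    set s : ℝ := max tstar l / 2 + u / 2 with hs_def
    have hmax_lt : max tstar l < u := max_lt hu_gt hl
    have hs1 : tstar < s := by
      have h1 : tstar ≤ max tstar l := le_max_left _ _
      simp only [hs_def]; linarith
    have hs2 : s < u := by simp only [hs_def]; linarith
    have hs3 : l < s := by
      have h1 : l ≤ max tstar l := le_max_right _ _
      simp only [hs_def]; linarith
    exact absurd (hlpos s hs3 hs2) (not_lt.2 (le_of_lt (hng s hs1 hs2)))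
  -- uniqueness
  refine ⟨tstar, hts0, hgs, hposlt, hneglt, ?_⟩
  intro t ht h0
  rcases lt_trichotomy t tstar with h | h | h
  · exact absurd h0 (ne_of_gt (hposlt t ht h))
  · exact h
  · exact absurd h0 (ne_of_lt (hneglt t h))
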